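/- If ω ∈ A₁(ℕ), then the symmetrized weight ω̃(k) := ω(|k|) belongs to A₁(ℤ) with ‖ω̃‖_{A₁(ℤ)} ≤ 4‖ω‖_{A₁(ℕ)}. -/
import Mathlib


open Finset MeasureTheory
open scoped Classical

noncomputable section

/-- The symmetric interval `S_{m,N} = {k : |k - m| ≤ N}` as a finite set. -/
def Sint (m : ℤ) (N : ℕ) : Finset ℤ := Finset.Icc (m - N) (m + N)

/-- `w(S) = Σ_{k ∈ S} w(k)`. -/
def wSum (w : ℤ → ℝ) (s : Finset ℤ) : ℝ := ∑ k ∈ s, w k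

/-- Discrete weighted Morrey norm `‖x‖_{l^p_q(w,v)}`. -/
def morreyNorm (p q : ℝ) (w v : ℤ → ℝ) (x : ℤ → ℝ) : ℝ :=
  ⨆ mN : ℤ × ℕ, (wSum v (Sint mN.1 mN.2)) ^ (1/q - 1/p) *
    (∑ k ∈ Sint mN.1 mN.2, |x k| ^ p * w k) ^ (1/p)

/-- if `w ∈ A₁(ℕ)` with norm `≤ A`, then `k ↦ w(|k|)` is in `A₁(ℤ)`
with norm `≤ 4A`. -/
theorem stmt7 (w : ℕ → ℝ) (hw : ∀ k, 0 < w k) (A : ℝ)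
    (hA : ∀ a b : ℕ, (hab : a ≤ b) →
      ((Finset.Icc a b).card : ℝ)⁻¹ * (∑ k ∈ Finset.Icc a b, w k) ≤
        A * (Finset.Icc a b).inf' (Finset.nonempty_Icc.mpr hab) w) :
    ∀ a b : ℤ, (hab : a ≤ b) →
      ((Finset.Icc a b).card : ℝ)⁻¹ * (∑ k ∈ Finset.Icc a b, w k.natAbs) ≤
        (4 * A) * (Finset.Icc a b).inf' (Finset.nonempty_Icc.mpr hab)
          (fun k => w k.natAbs) := by
  -- A ≥ 1
  have hA1 : 1 ≤ A := by
    have := hA 0 0 le_rfl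
    simp [Finset.Icc_self] at this
    have h0 := hw 0
    nlinarith
  -- restated hypothesis: sum bound
  have hA' : ∀ p q : ℕ, (hpq : p ≤ q) →
      ∑ k ∈ Finset.Icc p q, w k ≤
        A * (Finset.Icc p q).card * (Finset.Icc p q).inf' (Finset.nonempty_Icc.mpr hpq) w := by
    intro p q hpq
    have h := hA p q hpq
    have hcard : (0 : ℝ) < (Finset.Icc p q).card := by
      have : (Finset.Icc p q).Nonempty := Finset.nonempty_Icc.mpr hpq
      exact_mod_cast Finset.card_pos.mpr this
    rw [inv_mul_le_iff₀ hcard] at h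
    calc ∑ k ∈ Finset.Icc p q, w k ≤
        (Finset.Icc p q).card * (A * (Finset.Icc p q).inf' (Finset.nonempty_Icc.mpr hpq) w) := h
      _ = A * (Finset.Icc p q).card * (Finset.Icc p q).inf' (Finset.nonempty_Icc.mpr hpq) w := by
          ring
  intro a b hab
  have hcard : (0 : ℝ) < (Finset.Icc a b).card := by
    have : (Finset.Icc a b).Nonempty := Finset.nonempty_Icc.mpr hab
    exact_mod_cast Finset.card_pos.mpr this
  have hIpos : 0 < (Finset.Icc a b).inf' (Finset.nonempty_Icc.mpr hab) (fun k => w k.natAbs) :=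
    (Finset.lt_inf'_iff _).mpr (fun i _ => hw _)
  set I := (Finset.Icc a b).inf' (Finset.nonempty_Icc.mpr hab) (fun k => w k.natAbs) with hIdef
  -- main claim : sum ≤ 2 A card I
  have main : ∑ k ∈ Finset.Icc a b, w k.natAbs ≤ 2 * A * (Finset.Icc a b).card * I := by
    by_cases h0a : 0 ≤ a
    · -- nonnegative interval
      have hpq : a.toNat ≤ b.toNat := by omega
      have hsum : ∑ k ∈ Finset.Icc a b, w k.natAbs =
          ∑ n ∈ Finset.Icc a.toNat b.toNat, w n := by
        apply Finset.sum_nbij' (i := Int.toNat) (j := (Nat.cast : ℕ → ℤ)) <;>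
          simp only [Finset.mem_Icc] <;> intros <;> try omega
        congr 1; omega
      have hcards : ((Finset.Icc a b).card : ℝ) = ((Finset.Icc a.toNat b.toNat).card : ℝ) := by
        have : (Finset.Icc a b).card = (Finset.Icc a.toNat b.toNat).card := by
          rw [Int.card_Icc, Nat.card_Icc]; omega
        exact_mod_cast this
      have hinfle : (Finset.Icc a.toNat b.toNat).inf' (Finset.nonempty_Icc.mpr hpq) w ≤ I := by
        rw [hIdef]
        apply Finset.le_inf' _ _ (fun k hk => ?_)
        simp only [Finset.mem_Icc] at hk
        have hk' : k.natAbs ∈ Finset.Icc a.toNat b.toNat := by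
          simp only [Finset.mem_Icc]; omega
        exact Finset.inf'_le w hk'
      have hNcard : (0 : ℝ) ≤ ((Finset.Icc a.toNat b.toNat).card : ℝ) := by positivity
      have := hA' a.toNat b.toNat hpq
      rw [hsum, hcards]
      calc ∑ n ∈ Finset.Icc a.toNat b.toNat, w n
          ≤ A * (Finset.Icc a.toNat b.toNat).card *
              (Finset.Icc a.toNat b.toNat).inf' (Finset.nonempty_Icc.mpr hpq) w := this
        _ ≤ A * (Finset.Icc a.toNat b.toNat).card * I := by
            apply mul_le_mul_of_nonneg_left hinfle; positivity
        _ ≤ 2 * A * (Finset.Icc a.toNat b.toNat).card * I := by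
            have h0 : 0 ≤ A * (Finset.Icc a.toNat b.toNat).card * I :=
              mul_nonneg (mul_nonneg (le_trans zero_le_one hA1) hNcard) hIpos.le
            linarith
    · by_cases h0b : b ≤ 0
      · -- nonpositive interval
        have hpq : b.natAbs ≤ a.natAbs := by omega
        have hsum : ∑ k ∈ Finset.Icc a b, w k.natAbs =
            ∑ n ∈ Finset.Icc b.natAbs a.natAbs, w n := by
          apply Finset.sum_nbij' (i := Int.natAbs) (j := (fun n : ℕ => -(n : ℤ))) <;>
            simp only [Finset.mem_Icc] <;> intros <;> first | omega | trivial
        have hcards : ((Finset.Icc a b).card : ℝ) =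
            ((Finset.Icc b.natAbs a.natAbs).card : ℝ) := by
          have : (Finset.Icc a b).card = (Finset.Icc b.natAbs a.natAbs).card := by
            rw [Int.card_Icc, Nat.card_Icc]; omega
          exact_mod_cast this
        have hinfle : (Finset.Icc b.natAbs a.natAbs).inf' (Finset.nonempty_Icc.mpr hpq) w ≤ I := by
          rw [hIdef]
          apply Finset.le_inf' _ _ (fun k hk => ?_)
          simp only [Finset.mem_Icc] at hk
          have hk' : k.natAbs ∈ Finset.Icc b.natAbs a.natAbs := by
            simp only [Finset.mem_Icc]; omega
          exact Finset.inf'_le w hk'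
        have := hA' b.natAbs a.natAbs hpq
        rw [hsum, hcards]
        calc ∑ n ∈ Finset.Icc b.natAbs a.natAbs, w n
            ≤ A * (Finset.Icc b.natAbs a.natAbs).card *
                (Finset.Icc b.natAbs a.natAbs).inf' (Finset.nonempty_Icc.mpr hpq) w := this
          _ ≤ A * (Finset.Icc b.natAbs a.natAbs).card * I := by
              apply mul_le_mul_of_nonneg_left hinfle; positivity
          _ ≤ 2 * A * (Finset.Icc b.natAbs a.natAbs).card * I := by
              have h0 : 0 ≤ A * ((Finset.Icc b.natAbs a.natAbs).card : ℝ) * I :=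
                mul_nonneg (mul_nonneg (le_trans zero_le_one hA1) (by positivity)) hIpos.le
              linarith
      · -- mixed interval: a < 0 < b  (a ≤ -1, b ≥ 1)
        push_neg at h0a h0b
        have ha1 : a ≤ -1 := by omega
        have hb0 : (0 : ℤ) ≤ b := le_of_lt h0b
        set M : ℕ := max a.natAbs b.toNat with hM
        have hT := hA' 0 M (Nat.zero_le M)
        set T := ∑ n ∈ Finset.Icc 0 M, w n with hTdef
        set I0 := (Finset.Icc 0 M).inf' (Finset.nonempty_Icc.mpr (Nat.zero_le M)) w with hI0
        have hI0pos : 0 < I0 := (Finset.lt_inf'_iff _).mpr (fun i _ => hw _)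
        -- I0 ≤ I
        have hinfle : I0 ≤ I := by
          rw [hIdef]
          apply Finset.le_inf' _ _ (fun k hk => ?_)
          simp only [Finset.mem_Icc] at hk
          have hk' : k.natAbs ∈ Finset.Icc 0 M := by
            simp only [Finset.mem_Icc]; omega
          exact Finset.inf'_le w hk'
        -- split the sum
        have hsplit : Finset.Icc a b = Finset.Icc a (-1) ∪ Finset.Icc 0 b := by
          ext k; simp only [Finset.mem_union, Finset.mem_Icc]; omega
        have hdisj : Disjoint (Finset.Icc a (-1)) (Finset.Icc (0 : ℤ) b) := by
          rw [Finset.disjoint_left]; intro k hk hk'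
          simp only [Finset.mem_Icc] at hk hk'; omega
        have hsum : ∑ k ∈ Finset.Icc a b, w k.natAbs =
            (∑ k ∈ Finset.Icc a (-1), w k.natAbs) +
              ∑ k ∈ Finset.Icc (0 : ℤ) b, w k.natAbs := by
          rw [hsplit, Finset.sum_union hdisj]
        -- each half is at most T
        have hS1eq : ∑ k ∈ Finset.Icc a (-1), w k.natAbs =
            ∑ n ∈ Finset.Icc 1 a.natAbs, w n := by
          apply Finset.sum_nbij' (i := Int.natAbs) (j := (fun n : ℕ => -(n : ℤ))) <;>
            simp only [Finset.mem_Icc] <;> intros <;> first | omega | trivial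
        have hS2eq : ∑ k ∈ Finset.Icc (0 : ℤ) b, w k.natAbs =
            ∑ n ∈ Finset.Icc 0 b.toNat, w n := by
          apply Finset.sum_nbij' (i := Int.toNat) (j := (Nat.cast : ℕ → ℤ)) <;>
            simp only [Finset.mem_Icc] <;> intros <;> try omega
          congr 1; omega
        have hS1le : ∑ n ∈ Finset.Icc 1 a.natAbs, w n ≤ T := by
          rw [hTdef]
          apply Finset.sum_le_sum_of_subset_of_nonneg
          · apply Finset.Icc_subset_Icc (Nat.zero_le 1) (le_max_left _ _)
          · intro i _ _; exact (hw i).le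
        have hS2le : ∑ n ∈ Finset.Icc 0 b.toNat, w n ≤ T := by
          rw [hTdef]
          apply Finset.sum_le_sum_of_subset_of_nonneg
          · apply Finset.Icc_subset_Icc le_rfl (le_max_right _ _)
          · intro i _ _; exact (hw i).le
        -- cardinality comparison
        have hMcard : ((Finset.Icc 0 M).card : ℝ) ≤ ((Finset.Icc a b).card : ℝ) := by
          have : (Finset.Icc 0 M).card ≤ (Finset.Icc a b).card := by
            rw [Int.card_Icc, Nat.card_Icc]; omega
          exact_mod_cast this
        have hMcard0 : (0 : ℝ) ≤ ((Finset.Icc 0 M).card : ℝ) := by positivity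
        -- assemble
        have hTbound : T ≤ A * (Finset.Icc a b).card * I := by
          calc T ≤ A * (Finset.Icc 0 M).card * I0 := hT
            _ ≤ A * (Finset.Icc a b).card * I0 := by
                apply mul_le_mul_of_nonneg_right _ hI0pos.le
                apply mul_le_mul_of_nonneg_left hMcard (by linarith)
            _ ≤ A * (Finset.Icc a b).card * I := by
                apply mul_le_mul_of_nonneg_left hinfle; positivity
        rw [hsum, hS1eq, hS2eq]
        calc (∑ n ∈ Finset.Icc 1 a.natAbs, w n) + ∑ n ∈ Finset.Icc 0 b.toNat, w n
            ≤ T + T := add_le_add hS1le hS2le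
          _ ≤ 2 * A * (Finset.Icc a b).card * I := by linarith [hTbound]
  -- conclude
  rw [inv_mul_le_iff₀ hcard]
  have h0 : 0 ≤ A * ((Finset.Icc a b).card : ℝ) * I :=
    mul_nonneg (mul_nonneg (le_trans zero_le_one hA1) hcard.le) hIpos.le
  nlinarith [main, h0]
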